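/- Let f be convex, differentiable and L-smooth, and let {x_k} be generated by MAG with step size η_k = (f(x_k) - f*)/‖d_k‖². Then ‖x_{k+1} - x*‖² ≤ ‖x_k - x*‖² - (η_k + (1-β)/L)(f(x_k) - f*). -/

import Mathlib

open scoped RealInnerProductSpace

set_option maxHeartbeats 1000000 in
/-- ALR-MAG on a convex `L`-smooth function: the squared distance to the minimizer
decreases by at least `(η k + (1-β)/L) * (f (x k) - f*)`. -/
theorem alr_mag_smooth_distance_decrease
    {E : Type*} [NormedAddCommGroup E] [InnerProductSpace ℝ E]
    (f : E → ℝ) (g : E → E) (L : ℝ) (hL : 0 < L)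
    (hconv : ∀ y z : E, f y + ⟪g y, z - y⟫ ≤ f z)
    (hsmooth : ∀ y z : E, f z ≤ f y + ⟪g y, z - y⟫ + L / 2 * ‖z - y‖ ^ 2)
    (xstar : E) (fstar : ℝ) (hfstar : fstar = f xstar)
    (hmin : ∀ y : E, f xstar ≤ f y)
    (β : ℝ) (hβ : β ∈ Set.Ioo (0 : ℝ) 1)
    (x d : ℕ → E) (η : ℕ → ℝ)
    (hd0 : d 0 = 0)
    (hd : ∀ k, 1 ≤ k → d k = g (x k) + β • d (k - 1))
    (hdne : ∀ k, 1 ≤ k → d k ≠ 0)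
    (hη : ∀ k, 1 ≤ k → η k = (f (x k) - fstar) / ‖d k‖ ^ 2)
    (hx : ∀ k, 1 ≤ k → x (k + 1) = x k - η k • d k) :
    ∀ k, 1 ≤ k →
      ‖x (k + 1) - xstar‖ ^ 2 ≤
        ‖x k - xstar‖ ^ 2 - (η k + (1 - β) / L) * (f (x k) - fstar) := by
  obtain ⟨hβ0, hβ1⟩ := hβ
  have hLne : L ≠ 0 := ne_of_gt hL
  have h2Lne : (2:ℝ) * L ≠ 0 := by positivity
  -- g xstar = 0
  have hgstar : g xstar = 0 := by
    have h2 := hsmooth xstar (xstar - (1/L) • g xstar)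
    have hmin2 := hmin (xstar - (1/L) • g xstar)
    have e2 : xstar - (1/L) • g xstar - xstar = -((1/L) • g xstar) := by abel
    rw [e2, inner_neg_right, real_inner_smul_right, real_inner_self_eq_norm_sq,
      norm_neg, norm_smul, Real.norm_eq_abs,
      abs_of_pos (show (0:ℝ) < 1/L by positivity)] at h2
    have e : f xstar + -(1/L * ‖g xstar‖^2) + L/2 * (1/L * ‖g xstar‖)^2
        = f xstar - ‖g xstar‖^2 / (2*L) := by field_simp; ring
    rw [e] at h2
    have h6 : ‖g xstar‖^2 / (2*L) ≤ 0 := by linarith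
    have h8 := mul_le_mul_of_nonneg_right h6 (show (0:ℝ) ≤ 2*L by positivity)
    rw [div_mul_cancel₀ _ h2Lne, zero_mul] at h8
    have h9 : ‖g xstar‖ = 0 := by nlinarith [sq_nonneg ‖g xstar‖, norm_nonneg (g xstar)]
    exact norm_eq_zero.mp h9
  -- interpolation inequality (multiplied through by 2L)
  have interp : ∀ y z : E,
      2*L*(f y) + 2*L*⟪g y, z - y⟫ + ‖g z - g y‖^2 ≤ 2*L*(f z) := by
    intro y z
    set v := g z - g y with hv
    have h1 := hconv y (z - (1/L) • v)
    have h2 := hsmooth z (z - (1/L) • v)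
    have e1 : z - (1/L) • v - y = (z - y) - (1/L) • v := by abel
    have e2 : z - (1/L) • v - z = -((1/L) • v) := by abel
    rw [e1, inner_sub_right, real_inner_smul_right] at h1
    rw [e2, inner_neg_right, real_inner_smul_right, norm_neg, norm_smul,
      Real.norm_eq_abs, abs_of_pos (show (0:ℝ) < 1/L by positivity)] at h2
    have hc : L/2 * (1/L * ‖v‖)^2 = ‖v‖^2 / (2*L) := by field_simp
    rw [hc] at h2
    have hgv2 : 1/L * ⟪g z, v⟫ - 1/L * ⟪g y, v⟫ = 1/L * ‖v‖^2 := by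
      rw [← mul_sub, ← inner_sub_left, ← hv, real_inner_self_eq_norm_sq]
    have h3 : f y + ⟪g y, z - y⟫ + 1/L * ‖v‖^2 ≤ f z + ‖v‖^2 / (2*L) := by
      linarith [h1, h2, hgv2]
    have h4 := mul_le_mul_of_nonneg_left h3 (show (0:ℝ) ≤ 2*L by positivity)
    have e3 : 2*L*(1/L * ‖v‖^2) = 2*‖v‖^2 := by field_simp; try ring
    have e4 : 2*L*(‖v‖^2/(2*L)) = ‖v‖^2 := by field_simp; try ring
    nlinarith [h4, e3, e4]
  -- key scaled convexity bound at the minimizer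
  have hA : ∀ y : E, 2*L*(f y - fstar) + ‖g y‖^2 ≤ 2*L*⟪g y, y - xstar⟫ := by
    intro y
    have h := interp y xstar
    rw [hgstar, zero_sub, norm_neg] at h
    have e : ⟪g y, xstar - y⟫ = -⟪g y, y - xstar⟫ := by
      rw [show xstar - y = -(y - xstar) by abel, inner_neg_right]
    rw [e] at h
    rw [hfstar]
    nlinarith [h]
  have hmin' : ∀ y : E, fstar ≤ f y := fun y => hfstar ▸ hmin y
  have hprod : ∀ k, 1 ≤ k → η k * ‖d k‖^2 = f (x k) - fstar := by
    intro k hk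
    have hne : ‖d k‖^2 ≠ 0 := pow_ne_zero 2 (norm_ne_zero_iff.mpr (hdne k hk))
    rw [hη k hk]
    rw [div_mul_cancel₀ _ hne]
  have hηnn : ∀ k, 1 ≤ k → 0 ≤ η k := by
    intro k hk
    rw [hη k hk]
    exact div_nonneg (by linarith [hmin' (x k)]) (sq_nonneg _)
  -- main induction
  have key : ∀ k, 1 ≤ k →
      2*L*(f (x k) - fstar) + (1-β)*‖d k‖^2 ≤ 2*L*⟪d k, x k - xstar⟫ := by
    intro k hk
    induction k, hk using Nat.le_induction with
    | base =>
      have hd1 : d 1 = g (x 1) := by rw [hd 1 le_rfl]; simp [hd0]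
      rw [hd1]
      linarith [hA (x 1), mul_nonneg hβ0.le (sq_nonneg ‖g (x 1)‖)]
    | succ n hn ih =>
      have hdn1 : d (n+1) = g (x (n+1)) + β • d n := by
        simpa using hd (n+1) (by omega)
      have hxn1 : x (n+1) = x n - η n • d n := hx n hn
      have hpn := hprod n hn
      have hip : ⟪d (n+1), x (n+1) - xstar⟫ =
          ⟪g (x (n+1)), x (n+1) - xstar⟫ + β * (⟪d n, x n - xstar⟫ - η n * ‖d n‖^2) := by
        rw [hdn1, inner_add_left, real_inner_smul_left]
        congr 1
        rw [hxn1, show x n - η n • d n - xstar = (x n - xstar) - η n • d n by abel,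
          inner_sub_right, real_inner_smul_right, real_inner_self_eq_norm_sq,
          real_inner_comm]
      have hns : ‖d (n+1)‖^2 =
          ‖g (x (n+1))‖^2 + 2*β*⟪g (x (n+1)), d n⟫ + β^2*‖d n‖^2 := by
        rw [hdn1, norm_add_sq_real, real_inner_smul_right, norm_smul,
          Real.norm_eq_abs, abs_of_pos hβ0, mul_pow]
        ring
      have hAn := hA (x (n+1))
      have hCS : ⟪g (x (n+1)), d n⟫ ≤ ‖g (x (n+1))‖ * ‖d n‖ := real_inner_le_norm _ _
      have H2 := mul_le_mul_of_nonneg_left ih hβ0.le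
      have H3 : 0 ≤ β*(1-β)*(‖g (x (n+1))‖ * ‖d n‖ - ⟪g (x (n+1)), d n⟫) :=
        mul_nonneg (mul_nonneg hβ0.le (by linarith)) (by linarith)
      have H4 : 0 ≤ β*(‖g (x (n+1))‖ - (1-β)*‖d n‖)^2 :=
        mul_nonneg hβ0.le (sq_nonneg _)
      have hpn' : β*(2*L)*(η n * ‖d n‖^2) = β*(2*L)*(f (x n) - fstar) := by rw [hpn]
      rw [hip, hns]
      nlinarith [hAn, H2, H3, H4, hpn']
  -- final descent inequality
  intro k hk
  have hkey := key k hk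
  have hpk := hprod k hk
  have hηk := hηnn k hk
  have ha : 0 ≤ f (x k) - fstar := by linarith [hmin' (x k)]
  have hmul := mul_le_mul_of_nonneg_left hkey hηk
  have hnorm : ‖x (k+1) - xstar‖^2
      = ‖x k - xstar‖^2 - 2*(η k * ⟪d k, x k - xstar⟫) + η k^2 * ‖d k‖^2 := by
    rw [hx k hk, show x k - η k • d k - xstar = (x k - xstar) - η k • d k by abel]
    rw [norm_sub_sq_real, real_inner_smul_right, norm_smul, Real.norm_eq_abs,
      abs_of_nonneg hηk, mul_pow]
    rw [real_inner_comm (x k - xstar) (d k)]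
  rw [hnorm]
  have hpk2 : η k ^ 2 * ‖d k‖^2 = η k * (f (x k) - fstar) := by
    rw [sq, mul_assoc, hpk]
  have h2 : (2*(η k)*(f (x k) - fstar) + (1-β)/L*(f (x k) - fstar)) * L
      ≤ (2 * (η k * ⟪d k, x k - xstar⟫)) * L := by
    have hrL : (1-β)/L * L = 1-β := div_mul_cancel₀ _ hLne
    have e : (2*(η k)*(f (x k) - fstar) + (1-β)/L*(f (x k) - fstar)) * L
        = 2*L*(η k * (f (x k) - fstar)) + (1-β)*(f (x k) - fstar) := by
      linear_combination (f (x k) - fstar) * hrL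
    rw [e]
    calc 2*L*(η k * (f (x k) - fstar)) + (1-β)*(f (x k) - fstar)
        = η k * (2*L*(f (x k) - fstar) + (1-β)*‖d k‖^2) := by rw [← hpk]; ring
      _ ≤ η k * (2*L*⟪d k, x k - xstar⟫) := hmul
      _ = (2 * (η k * ⟪d k, x k - xstar⟫)) * L := by ring
  have h3 := le_of_mul_le_mul_right h2 hL
  linarith [h3, hpk2]
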